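/- Let H be an imprimitive permutation group on a finite set Ω and let Δ ⊆ Ω be a minimal block of imprimitivity of H. Suppose that the induced group H^Δ_Δ is a relation group on Δ that has at least |Ω|/|Δ| regular sets on Δ of pairwise distinct cardinalities. Then every subgroup of H is a relation group on Ω. -/

import Mathlib

open Pointwise MulAction

/-- The invariance group `G(R)` of an unordered relation `R` on `Ω`:
all permutations `g` such that `x ∈ R` implies `g • x ∈ R`. -/
def invGroup {Ω : Type*} [Fintype Ω] [DecidableEq Ω] (R : Set (Finset Ω)) :
    Subgroup (Equiv.Perm Ω) where
  carrier := {g | ∀ x ∈ R, g • x ∈ R}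
  one_mem' := fun x hx => by simpa using hx
  mul_mem' := fun ha hb x hx => by rw [mul_smul]; exact ha _ (hb _ hx)
  inv_mem' := by
    intro g hg x hx
    have himg : (fun y : Finset _ => g • y) '' R ⊆ R := by
      rintro - ⟨y, hy, rfl⟩; exact hg y hy
    have heq : (fun y : Finset _ => g • y) '' R = R := by
      apply Set.eq_of_subset_of_ncard_le himg _ (Set.toFinite R)
      rw [Set.ncard_image_of_injective _ (MulAction.injective g)]
    rw [← heq] at hx
    obtain ⟨y, hy, hxy⟩ := hx
    have : g⁻¹ • x = y := by rw [← hxy]; simp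
    rwa [this]

/-- A permutation group on `Ω` is a relation group if it is the invariance group
of some unordered relation on `Ω`. -/
def IsRelationGroup {Ω : Type*} [Fintype Ω] [DecidableEq Ω]
    (G : Subgroup (Equiv.Perm Ω)) : Prop :=
  ∃ R : Set (Finset Ω), G = invGroup R

/-- `w` is a regular set for `G`: only the identity of `G` stabilizes `w` setwise. -/
def IsRegularSet {Ω : Type*} [DecidableEq Ω] (G : Subgroup (Equiv.Perm Ω))
    (w : Finset Ω) : Prop :=
  ∀ g ∈ G, g • w = w → g = 1

/-- The arity of a relation: the set of cardinalities of its members. -/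
def arity {Ω : Type*} (R : Set (Finset Ω)) : Set ℕ := {n | ∃ x ∈ R, x.card = n}

/-- `G` is orbit closed: every permutation mapping each finite subset into its
`G`-orbit already lies in `G`. -/
def IsOrbitClosed {Ω : Type*} [DecidableEq Ω] (G : Subgroup (Equiv.Perm Ω)) : Prop :=
  ∀ g : Equiv.Perm Ω, (∀ x : Finset Ω, ∃ h ∈ G, g • x = h • x) → g ∈ G

/-- `G` is set-transitive: transitive on `k`-element subsets for every `k`. -/
def IsSetTransitive {Ω : Type*} [DecidableEq Ω] (G : Subgroup (Equiv.Perm Ω)) : Prop :=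
  ∀ x y : Finset Ω, x.card = y.card → ∃ g ∈ G, g • x = y

/-- A permutation group is primitive if it is transitive and every block of the
action is trivial (a subsingleton or the whole set). -/
def IsPrimitivePermGroup {Ω : Type*} (G : Subgroup (Equiv.Perm Ω)) : Prop :=
  MulAction.IsPretransitive ↥G Ω ∧
    ∀ B : Set Ω, MulAction.IsBlock ↥G B → B.Subsingleton ∨ B = Set.univ

/-- Restriction of the setwise stabilizer of a finite set `Δ` to a permutation group on `Δ`. -/
def restrictHom {Ω : Type*} [DecidableEq Ω] (Δ : Finset Ω) :
    ↥(MulAction.stabilizer (Equiv.Perm Ω) Δ) →* Equiv.Perm {x // x ∈ Δ} where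
  toFun h := Equiv.Perm.subtypePerm h.1 (fun x => by
    symm
    constructor
    · intro hx
      have := Finset.smul_mem_smul_finset (a := h.1) hx
      rwa [h.2] at this
    · intro hx
      have h2 : h.1 • x ∈ h.1 • Δ := by rw [h.2]; exact hx
      exact (Finset.smul_mem_smul_finset_iff h.1).mp h2)
  map_one' := rfl
  map_mul' _ _ := rfl

/-- The group `H^Δ_Δ` induced on `Δ` by the setwise stabilizer of `Δ` in `H`. -/
def inducedGroup {Ω : Type*} [DecidableEq Ω] (H : Subgroup (Equiv.Perm Ω)) (Δ : Finset Ω) :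
    Subgroup (Equiv.Perm {x // x ∈ Δ}) :=
  Subgroup.map (restrictHom Δ)
    ((H ⊓ MulAction.stabilizer (Equiv.Perm Ω) Δ).subgroupOf
      (MulAction.stabilizer (Equiv.Perm Ω) Δ))


set_option linter.unusedSectionVars false
section AuxLemmas
variable {Ω : Type*} [Fintype Ω] [DecidableEq Ω]

lemma smul_finset_compl' (g : Equiv.Perm Ω) (s : Finset Ω) :
    g • sᶜ = (g • s)ᶜ := by
  ext x
  simp only [Finset.mem_smul_finset, Finset.mem_compl]
  constructor
  · rintro ⟨y, hy, rfl⟩ ⟨z, hz, hzy⟩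
    exact hy (by rwa [g.injective (show g z = g y from hzy)] at hz)
  · intro h
    refine ⟨g⁻¹ x, fun hc => h ⟨g⁻¹ x, hc, by simp [Equiv.Perm.smul_def]⟩,
      by simp [Equiv.Perm.smul_def]⟩

lemma mem_invGroup' {R : Set (Finset Ω)} {g : Equiv.Perm Ω} :
    g ∈ invGroup R ↔ ∀ x ∈ R, g • x ∈ R := Iff.rfl

/-- embed a finset of the subtype of `Δ` into `Ω`. -/
def hat (Δ : Finset Ω) (s : Finset {x // x ∈ Δ}) : Finset Ω :=
  s.map (Function.Embedding.subtype _)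

lemma hat_subset {Δ : Finset Ω} (s : Finset {x // x ∈ Δ}) : hat Δ s ⊆ Δ := by
  intro x hx
  simp only [hat, Finset.mem_map, Function.Embedding.coe_subtype] at hx
  obtain ⟨⟨y, hy⟩, -, rfl⟩ := hx
  exact hy

lemma hat_card {Δ : Finset Ω} (s : Finset {x // x ∈ Δ}) : (hat Δ s).card = s.card :=
  Finset.card_map _

lemma hat_inj {Δ : Finset Ω} : Function.Injective (hat Δ) :=
  fun _ _ h => Finset.map_injective _ h

lemma hat_univ {Δ : Finset Ω} : hat Δ Finset.univ = Δ := by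
  ext x
  simp [hat, Finset.mem_map, Function.Embedding.coe_subtype]

lemma hat_nonempty {Δ : Finset Ω} {s : Finset {x // x ∈ Δ}} (h : s.Nonempty) :
    (hat Δ s).Nonempty := by
  obtain ⟨a, ha⟩ := h
  exact ⟨a.1, Finset.mem_map_of_mem _ ha⟩

lemma exists_hat {Δ x : Finset Ω} (h : x ⊆ Δ) : ∃ s, hat Δ s = x := by
  classical
  refine ⟨x.subtype _, ?_⟩
  rw [hat, Finset.subtype_map]
  exact Finset.filter_true_of_mem fun a ha => h ha

lemma smul_hat {Δ : Finset Ω} (ψ : ↥(MulAction.stabilizer (Equiv.Perm Ω) Δ))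
    (s : Finset {x // x ∈ Δ}) :
    (ψ : Equiv.Perm Ω) • hat Δ s = hat Δ ((restrictHom Δ ψ) • s) := by
  ext x
  simp only [hat, Finset.mem_smul_finset, Finset.mem_map, Function.Embedding.coe_subtype]
  constructor
  · rintro ⟨y, hy, rfl⟩
    obtain ⟨⟨z, hz⟩, hzs, rfl⟩ := hy
    exact ⟨(restrictHom Δ ψ) ⟨z, hz⟩,
      Finset.mem_smul_finset.mp (Finset.smul_mem_smul_finset hzs), rfl⟩
  · rintro ⟨⟨y, hy⟩, hys, rfl⟩
    obtain ⟨⟨z, hz⟩, hzs, hzy⟩ := hys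
    refine ⟨z, ⟨⟨z, hz⟩, hzs, rfl⟩, ?_⟩
    exact congrArg Subtype.val hzy

lemma restrict_eq_one_fixes {Δ : Finset Ω} (ψ : ↥(MulAction.stabilizer (Equiv.Perm Ω) Δ))
    (h : restrictHom Δ ψ = 1) : ∀ x ∈ Δ, (ψ : Equiv.Perm Ω) x = x := by
  intro x hx
  have := congrArg (fun f => (f ⟨x, hx⟩ : {y // y ∈ Δ}).1) h
  exact this

end AuxLemmas
set_option linter.unusedSectionVars false
section Conn
variable {Ω : Type*} [Fintype Ω] [DecidableEq Ω]

/-- two points related by a member of the family. -/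
def StepRel (L : Set (Finset Ω)) (x y : Ω) : Prop := ∃ r ∈ L, x ∈ r ∧ y ∈ r

/-- connectivity relation generated by a family of finsets. -/
def PRel (L : Set (Finset Ω)) : Ω → Ω → Prop := Relation.ReflTransGen (StepRel L)

lemma StepRel.symmetric (L : Set (Finset Ω)) : Symmetric (StepRel L) :=
  fun _ _ ⟨r, h1, h2, h3⟩ => ⟨r, h1, h3, h2⟩

lemma PRel.symm {L : Set (Finset Ω)} {x y : Ω} (h : PRel L x y) : PRel L y x :=
  (@Relation.ReflTransGen.stdSymm _ _ ⟨fun _ _ hh => StepRel.symmetric L hh⟩).symm _ _ h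

/-- the connected component of `x`. -/
noncomputable def Cl (L : Set (Finset Ω)) (x : Ω) : Finset Ω :=
  @Finset.filter _ (PRel L x) (Classical.decPred _) Finset.univ

lemma mem_Cl {L : Set (Finset Ω)} {x y : Ω} : y ∈ Cl L x ↔ PRel L x y := by
  simp [Cl, Finset.mem_filter]

lemma PRel_smul {L : Set (Finset Ω)} (π : Equiv.Perm Ω) (hπ : ∀ r ∈ L, π • r ∈ L)
    {x y : Ω} (h : PRel L x y) : PRel L (π x) (π y) := by
  induction h with
  | refl => exact Relation.ReflTransGen.refl
  | tail _ hbc ih =>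
      obtain ⟨r, hr, hb, hc⟩ := hbc
      exact ih.tail ⟨π • r, hπ r hr, Finset.smul_mem_smul_finset hb,
        Finset.smul_mem_smul_finset hc⟩

lemma smul_Cl {L : Set (Finset Ω)} (π : Equiv.Perm Ω) (hπ : ∀ r ∈ L, π • r ∈ L)
    (hπ' : ∀ r ∈ L, π⁻¹ • r ∈ L) (x : Ω) : π • Cl L x = Cl L (π x) := by
  ext y
  simp only [Finset.mem_smul_finset, mem_Cl]
  constructor
  · rintro ⟨z, hz, rfl⟩
    exact PRel_smul π hπ hz
  · intro hy
    refine ⟨π⁻¹ y, ?_, by simp [Equiv.Perm.smul_def]⟩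
    have := PRel_smul π⁻¹ hπ' hy
    simpa using this

lemma Cl_eq_of_rel {L : Set (Finset Ω)} {x y : Ω} (h : PRel L x y) : Cl L x = Cl L y := by
  ext z
  simp only [mem_Cl]
  exact ⟨fun hz => Relation.ReflTransGen.trans h.symm hz,
    fun hz => Relation.ReflTransGen.trans h hz⟩

end Conn

section Swap
variable {α : Type*} [DecidableEq α]
open Pointwise

lemma swap_smul_eq_of_mem {v : Finset α} {x y : α} (hx : x ∈ v) (hy : y ∈ v) :
    Equiv.swap x y • v = v := by
  apply Finset.eq_of_subset_of_card_le _ (le_of_eq (Finset.card_smul_finset _ _).symm)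
  · rintro z hz
    obtain ⟨u, hu, rfl⟩ := Finset.mem_smul_finset.mp hz
    show Equiv.swap x y u ∈ v
    rcases eq_or_ne u x with rfl | hux
    · simpa [Equiv.swap_apply_left] using hy
    rcases eq_or_ne u y with rfl | huy
    · simpa [Equiv.swap_apply_right] using hx
    · simpa [Equiv.swap_apply_of_ne_of_ne hux huy] using hu

lemma swap_smul_eq_of_not_mem {v : Finset α} {x y : α} (hx : x ∉ v) (hy : y ∉ v) :
    Equiv.swap x y • v = v := by
  apply Finset.eq_of_subset_of_card_le _ (le_of_eq (Finset.card_smul_finset _ _).symm)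
  · rintro z hz
    obtain ⟨u, hu, rfl⟩ := Finset.mem_smul_finset.mp hz
    show Equiv.swap x y u ∈ v
    have hux : u ≠ x := fun h => hx (h ▸ hu)
    have huy : u ≠ y := fun h => hy (h ▸ hu)
    simpa [Equiv.swap_apply_of_ne_of_ne hux huy] using hu
end Swap
/-- If `H` is imprimitive on `Ω` with a minimal block of imprimitivity `Δ` and
the induced group `H^Δ_Δ` is a relation group on `Δ` having at least
`|Ω| / |Δ|` regular sets of pairwise distinct cardinalities, then every
subgroup of `H` is a relation group on `Ω`. -/
theorem subgroups_isRelationGroup_of_block {Ω : Type*} [Fintype Ω] [DecidableEq Ω]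
    (H : Subgroup (Equiv.Perm Ω))
    (htrans : MulAction.IsPretransitive ↥H Ω) (himpr : ¬ IsPrimitivePermGroup H)
    (Δ : Finset Ω) (hblock : MulAction.IsBlock ↥H (↑Δ : Set Ω))
    (h1 : 1 < Δ.card) (h2 : Δ.card < Fintype.card Ω)
    (hmin : ∀ B : Finset Ω, MulAction.IsBlock ↥H (↑B : Set Ω) → B ⊆ Δ → B ≠ Δ →
      B.card ≤ 1)
    (hrel : IsRelationGroup (inducedGroup H Δ))
    (hregs : ∃ w : Fin (Fintype.card Ω / Δ.card) → Finset {x // x ∈ Δ},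
      (∀ i, IsRegularSet (inducedGroup H Δ) (w i)) ∧
      Function.Injective fun i => (w i).card)
    (G : Subgroup (Equiv.Perm Ω)) (hG : G ≤ H) :
    IsRelationGroup G := by
  classical
  obtain ⟨S, hS⟩ := hrel
  obtain ⟨w, hwreg, hwinj⟩ := hregs
  have hd2 : 2 ≤ Δ.card := h1
  have hΔne : Δ.Nonempty := Finset.card_pos.mp (by omega)
  obtain ⟨δ₀, hδ₀⟩ := hΔne
  -- coverage of Ω by blocks
  have hcover : ∀ x : Ω, ∃ h, h ∈ H ∧ x ∈ h • Δ := by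
    intro x
    obtain ⟨g, hg⟩ := htrans.exists_smul_eq δ₀ x
    exact ⟨(g : Equiv.Perm Ω), g.2, Finset.mem_smul_finset.mpr ⟨δ₀, hδ₀, hg⟩⟩
  -- blocks are equal or disjoint
  have hdisj : ∀ h h' : Equiv.Perm Ω, h ∈ H → h' ∈ H →
      h • Δ = h' • Δ ∨ Disjoint (h • Δ) (h' • Δ) := by
    intro h h' hh hh'
    have := hblock.smul_eq_smul_or_disjoint (⟨h, hh⟩ : ↥H) (⟨h', hh'⟩ : ↥H)
    have hc : ∀ (a : Equiv.Perm Ω) (ha : a ∈ H),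
        (⟨a, ha⟩ : ↥H) • (↑Δ : Set Ω) = ↑(a • Δ) := by
      intro a ha; rw [Finset.coe_smul_finset]; rfl
    rcases this with he | hdj
    · left; apply Finset.coe_injective; rw [← hc h hh, ← hc h' hh', he]
    · right; rw [← Finset.disjoint_coe, ← hc h hh, ← hc h' hh']; exact hdj
  -- membership in the induced group
  have hindmem : ∀ (h : Equiv.Perm Ω) (hh : h ∈ H)
      (hst : h ∈ MulAction.stabilizer (Equiv.Perm Ω) Δ),
      restrictHom Δ ⟨h, hst⟩ ∈ inducedGroup H Δ := by
    intro h hh hst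
    exact Subgroup.mem_map.mpr ⟨⟨h, hst⟩, Subgroup.mem_subgroupOf.mpr ⟨hh, hst⟩, rfl⟩
  -- the induced group acts transitively on Δ
  have hKtrans : ∀ a b : {x // x ∈ Δ}, ∃ k, k ∈ inducedGroup H Δ ∧ k a = b := by
    intro a b
    obtain ⟨g, hg⟩ := htrans.exists_smul_eq (a : Ω) (b : Ω)
    have hst' : (g : Equiv.Perm Ω) • Δ = Δ := by
      rcases hdisj (g : Equiv.Perm Ω) 1 g.2 (one_mem _) with he | hdj
      · simpa using he
      · exfalso
        have hb1 : (b : Ω) ∈ (g : Equiv.Perm Ω) • Δ :=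
          Finset.mem_smul_finset.mpr ⟨(a : Ω), a.2, hg⟩
        have hb2 : (b : Ω) ∈ (1 : Equiv.Perm Ω) • Δ := by simpa using b.2
        exact Finset.disjoint_left.mp hdj hb1 hb2
    have hst : (g : Equiv.Perm Ω) ∈ MulAction.stabilizer (Equiv.Perm Ω) Δ :=
      MulAction.mem_stabilizer_iff.mpr hst'
    exact ⟨restrictHom Δ ⟨(g : Equiv.Perm Ω), hst⟩, hindmem _ g.2 hst, Subtype.ext hg⟩
  -- 2d ≤ n
  have hn2d : 2 * Δ.card ≤ Fintype.card Ω := by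
    have hcne : (Δᶜ).Nonempty := Finset.card_pos.mp (by rw [Finset.card_compl]; omega)
    obtain ⟨p, hp⟩ := hcne
    rw [Finset.mem_compl] at hp
    obtain ⟨h, hh, hph⟩ := hcover p
    have hdj : Disjoint (h • Δ) Δ := by
      rcases hdisj h 1 hh (one_mem _) with he | hdj
      · rw [one_smul] at he; exact absurd (he ▸ hph) hp
      · rwa [one_smul] at hdj
    calc 2 * Δ.card = (h • Δ).card + Δ.card := by rw [Finset.card_smul_finset]; ring
      _ = (h • Δ ∪ Δ).card := (Finset.card_union_of_disjoint hdj).symm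
      _ ≤ Fintype.card Ω := by rw [← Finset.card_univ]; exact Finset.card_le_univ _
  have hdpos : 0 < Δ.card := by omega
  have hm2 : 2 ≤ Fintype.card Ω / Δ.card :=
    (Nat.le_div_iff_mul_le hdpos).mpr hn2d
  -- there is a "big" member of S (of card between 2 and d-1)
  have hbig : ∃ s, s ∈ S ∧ 2 ≤ s.card ∧ s.card < Δ.card := by
    by_contra hnot
    push_neg at hnot
    have hsub : ∀ s : Finset {x // x ∈ Δ}, s.card ≤ Δ.card := by
      intro s
      simpa [Finset.card_univ, Fintype.card_coe] using Finset.card_le_univ s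
    have htop : ∀ π : Equiv.Perm {x // x ∈ Δ}, π ∈ invGroup S := by
      intro π s hsS
      rcases Nat.eq_zero_or_pos s.card with h0 | hpos
      · have h0' : s = ∅ := Finset.card_eq_zero.mp h0
        rw [h0'] at hsS ⊢
        simpa using hsS
      rcases eq_or_lt_of_le (hsub s) with hfull | hlt
      · have hsu : s = Finset.univ := by
          apply Finset.eq_univ_of_card
          rw [hfull, Fintype.card_coe]
        rw [hsu, Finset.smul_finset_univ]
        rwa [hsu] at hsS
      · have hcard1 : s.card = 1 := by
          rcases Nat.lt_or_ge s.card 2 with hc | hc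
          · omega
          · have := hnot s hsS hc; omega
        obtain ⟨δ, rfl⟩ := Finset.card_eq_one.mp hcard1
        obtain ⟨k, hkK, hk⟩ := hKtrans δ (π δ)
        have hks : k • ({δ} : Finset {x // x ∈ Δ}) ∈ S := by
          rw [hS] at hkK; exact hkK _ hsS
        rw [Finset.smul_finset_singleton] at hks
        rw [Finset.smul_finset_singleton]
        have hkδ : k • δ = π • δ := by
          show k δ = π δ
          rw [hk]
        rwa [hkδ] at hks
    have hregcard : ∀ i, (w i).card = 1 := by
      intro i
      have hreg := hwreg i
      have hKtop : ∀ π : Equiv.Perm {x // x ∈ Δ}, π ∈ inducedGroup H Δ := by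
        intro π; rw [hS]; exact htop π
      have hwle : (w i).card ≤ 1 := by
        by_contra hgt
        obtain ⟨x, hx, y, hy, hxy⟩ := Finset.one_lt_card.mp (show 1 < (w i).card by omega)
        exact hxy (Equiv.swap_eq_one_iff.mp
          (hreg (Equiv.swap x y) (hKtop _) (swap_smul_eq_of_mem hx hy)))
      have hwc : ((w i)ᶜ).card ≤ 1 := by
        by_contra hgt
        obtain ⟨x, hx, y, hy, hxy⟩ := Finset.one_lt_card.mp (show 1 < ((w i)ᶜ).card by omega)
        rw [Finset.mem_compl] at hx hy
        exact hxy (Equiv.swap_eq_one_iff.mp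
          (hreg (Equiv.swap x y) (hKtop _) (swap_smul_eq_of_not_mem hx hy)))
      have hsum : (w i).card + ((w i)ᶜ).card = Δ.card := by
        rw [Finset.card_add_card_compl, Fintype.card_coe]
      omega
    have h01 : (⟨0, by omega⟩ : Fin (Fintype.card Ω / Δ.card)) =
        (⟨1, by omega⟩ : Fin (Fintype.card Ω / Δ.card)) :=
      hwinj (by simp only [hregcard])
    simp [Fin.mk.injEq] at h01
  obtain ⟨s₀, hs₀S, hs₀2, hs₀d⟩ := hbig
  -- the block system as a finset
  set B : Finset (Finset Ω) :=
    (Finset.univ.filter (fun h : Equiv.Perm Ω => h ∈ H)).image (fun h => h • Δ) with hBdef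
  have hmemB : ∀ b, b ∈ B ↔ ∃ h, h ∈ H ∧ h • Δ = b := by
    intro b; simp [hBdef, Finset.mem_image, Finset.mem_filter]
  have hBd : ∀ b ∈ B, b.card = Δ.card := by
    intro b hb; obtain ⟨h, _, rfl⟩ := (hmemB b).mp hb; exact Finset.card_smul_finset _ _
  have hBdisj : ∀ b ∈ B, ∀ b' ∈ B, b ≠ b' → Disjoint b b' := by
    intro b hb b' hb' hne
    obtain ⟨h, hh, rfl⟩ := (hmemB b).mp hb
    obtain ⟨h', hh', rfl⟩ := (hmemB b').mp hb'
    rcases hdisj h h' hh hh' with he | hdj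
    · exact absurd he hne
    · exact hdj
  have hBcard : B.card = Fintype.card Ω / Δ.card := by
    have hbu : B.biUnion (fun b => b) = Finset.univ := by
      apply Finset.eq_univ_of_forall
      intro x
      obtain ⟨h, hh, hx⟩ := hcover x
      exact Finset.mem_biUnion.mpr ⟨h • Δ, (hmemB _).mpr ⟨h, hh, rfl⟩, hx⟩
    have hn' : Fintype.card Ω = B.card * Δ.card := by
      rw [← Finset.card_univ, ← hbu,
        Finset.card_biUnion (t := fun b => b) (fun b hb b' hb' hne => hBdisj b hb b' hb' hne)]
      rw [Finset.sum_congr rfl (fun b hb => hBd b hb), Finset.sum_const, smul_eq_mul]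
    rw [hn', Nat.mul_div_cancel _ hdpos]
  -- enumeration of blocks
  have hblkex : ∃ blk : Fin (Fintype.card Ω / Δ.card) → Finset Ω,
      (∀ i, blk i ∈ B) ∧ (∀ b ∈ B, ∃ i, blk i = b) ∧ Function.Injective blk := by
    have e := B.equivFin
    refine ⟨fun i => (e.symm (Fin.cast hBcard.symm i)).1,
      fun i => (e.symm (Fin.cast hBcard.symm i)).2, ?_, ?_⟩
    · intro b hb
      refine ⟨Fin.cast hBcard (e ⟨b, hb⟩), ?_⟩
      have hcc : Fin.cast hBcard.symm (Fin.cast hBcard (e ⟨b, hb⟩)) = e ⟨b, hb⟩ := by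
        apply Fin.ext; simp
      simp only [hcc, Equiv.symm_apply_apply]
    · intro i j hij
      have h2 := e.symm.injective (Subtype.ext hij)
      apply Fin.ext
      simpa using congrArg Fin.val h2
  obtain ⟨blk, hblkB, hblksurj, hblkinj⟩ := hblkex
  -- block representatives
  set rep : Finset Ω → Equiv.Perm Ω :=
    fun b => if hb : ∃ h, h ∈ H ∧ h • Δ = b then hb.choose else 1 with hrepdef
  have hrep : ∀ b ∈ B, rep b ∈ H ∧ rep b • Δ = b := by
    intro b hb
    have hex := (hmemB b).mp hb
    simp only [hrepdef, dif_pos hex]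
    exact hex.choose_spec
  -- the coding set W
  set W : Finset Ω := Finset.univ.biUnion (fun i => rep (blk i) • hat Δ (w i)) with hWdef
  have hWsub : ∀ i, rep (blk i) • hat Δ (w i) ⊆ blk i := by
    intro i
    have := Finset.smul_finset_subset_smul_finset
      (a := rep (blk i)) (hat_subset (w i))
    rwa [(hrep _ (hblkB i)).2] at this
  have hWtr : ∀ i, W ∩ blk i = rep (blk i) • hat Δ (w i) := by
    intro i
    ext x
    simp only [hWdef, Finset.mem_inter, Finset.mem_biUnion, Finset.mem_univ, true_and]
    constructor
    · rintro ⟨⟨j, hj⟩, hxi⟩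
      rcases eq_or_ne j i with rfl | hne
      · exact hj
      · exact absurd hxi (Finset.disjoint_left.mp
          (hBdisj (blk j) (hblkB j) (blk i) (hblkB i)
            (fun he => hne (hblkinj he))) (hWsub j hj))
    · intro hx
      exact ⟨⟨i, hx⟩, hWsub i hx⟩
  -- the relation
  set V : Finset Ω :=
    if ∃ s, (s ∈ S ∧ 0 < s.card ∧ s.card < Δ.card) ∧ s.card = W.card then Wᶜ else W with hVdef
  have hVcard : ¬∃ s, (s ∈ S ∧ 0 < s.card ∧ s.card < Δ.card) ∧ s.card = V.card := by
    by_cases hc : ∃ s, (s ∈ S ∧ 0 < s.card ∧ s.card < Δ.card) ∧ s.card = W.card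
    · rw [hVdef, if_pos hc]
      rintro ⟨s, ⟨hsS, hs0, hsd⟩, hcard⟩
      obtain ⟨s', ⟨_, _, hs'd⟩, hcard'⟩ := hc
      rw [Finset.card_compl] at hcard
      have hWn : W.card ≤ Fintype.card Ω := by
        rw [← Finset.card_univ]; exact Finset.card_le_univ _
      omega
    · rw [hVdef, if_neg hc]; exact hc
  set LS : Set (Finset Ω) :=
    {x | ∃ h, h ∈ H ∧ ∃ s, (s ∈ S ∧ 0 < s.card ∧ s.card < Δ.card) ∧ x = h • hat Δ s} with hLSdef
  set LW : Set (Finset Ω) := {x | ∃ g, g ∈ G ∧ x = g • V} with hLWdef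
  set R : Set (Finset Ω) := LS ∪ LW with hRdef
  -- G is contained in the invariance group
  have hGR : ∀ g ∈ G, g ∈ invGroup R := by
    intro g hg x hx
    rcases hx with hx | hx
    · obtain ⟨h, hh, s, hs, rfl⟩ := hx
      exact Or.inl ⟨g * h, H.mul_mem (hG hg) hh, s, hs, (smul_smul g h _)⟩
    · obtain ⟨g', hg', rfl⟩ := hx
      exact Or.inr ⟨g * g', G.mul_mem hg hg', (smul_smul g g' _)⟩
  -- level separation
  have hpresS : ∀ π ∈ invGroup R, ∀ x ∈ LS, π • x ∈ LS := by
    intro π hπ x hx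
    rcases hπ x (Or.inl hx) with h1 | h1
    · exact h1
    · exfalso
      obtain ⟨g', hg', heq⟩ := h1
      obtain ⟨h, hh, s, hs, rfl⟩ := hx
      apply hVcard
      refine ⟨s, hs, ?_⟩
      have hc := congrArg Finset.card heq
      simpa [Finset.card_smul_finset, hat_card] using hc
  have hpresW : ∀ π ∈ invGroup R, ∀ x ∈ LW, π • x ∈ LW := by
    intro π hπ x hx
    rcases hπ x (Or.inr hx) with h1 | h1
    · exfalso
      obtain ⟨g', hg', rfl⟩ := hx
      obtain ⟨h, hh, s, hs, heq⟩ := h1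
      apply hVcard
      refine ⟨s, hs, ?_⟩
      have hc := congrArg Finset.card heq
      simp only [Finset.card_smul_finset, hat_card] at hc
      exact hc.symm
    · exact h1
  -- connected components of LS are exactly the blocks
  -- paths stay within a block
  have hstep : ∀ (h : Equiv.Perm Ω), h ∈ H → ∀ x y, PRel LS x y → x ∈ h • Δ → y ∈ h • Δ := by
    intro h hh x y hxy
    induction hxy with
    | refl => exact id
    | tail hab hbc ih =>
        intro hx
        have hb := ih hx
        obtain ⟨r, hr, hbr, hcr⟩ := hbc
        obtain ⟨h', hh', s, hs, rfl⟩ := hr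
        have hsub : h' • hat Δ s ⊆ h' • Δ :=
          Finset.smul_finset_subset_smul_finset (hat_subset s)
        rcases hdisj h' h hh' hh with he | hdj
        · exact he ▸ hsub hcr
        · exact absurd hb (Finset.disjoint_left.mp hdj (hsub hbr))
  -- members of H preserve LS
  have hHLS : ∀ (h : Equiv.Perm Ω), h ∈ H → ∀ r ∈ LS, h • r ∈ LS := by
    intro h hh r hr
    obtain ⟨h', hh', s, hs, rfl⟩ := hr
    exact ⟨h * h', H.mul_mem hh hh', s, hs, (smul_smul h h' _)⟩
  have hClΔ : ∀ δ ∈ Δ, Cl LS δ = Δ := by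
    have hs₀LS : hat Δ s₀ ∈ LS :=
      ⟨1, one_mem _, s₀, ⟨hs₀S, by omega, hs₀d⟩, (one_smul _ _).symm⟩
    obtain ⟨x₀, hx₀, y₀, hy₀, hxy₀⟩ := Finset.one_lt_card.mp
      (show 1 < (hat Δ s₀).card by rw [hat_card]; omega)
    have hx₀Δ : x₀ ∈ Δ := hat_subset _ hx₀
    have hP : PRel LS x₀ y₀ := Relation.ReflTransGen.single ⟨hat Δ s₀, hs₀LS, hx₀, hy₀⟩
    have hClblock : MulAction.IsBlock ↥H (↑(Cl LS x₀) : Set Ω) := by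
      rw [MulAction.isBlock_iff_smul_eq_or_disjoint]
      intro g
      have hg1 : (g : ↥H) • (↑(Cl LS x₀) : Set Ω) = ↑((g : Equiv.Perm Ω) • Cl LS x₀) := by
        rw [Finset.coe_smul_finset]; rfl
      have hsmul : (g : Equiv.Perm Ω) • Cl LS x₀ = Cl LS ((g : Equiv.Perm Ω) x₀) :=
        smul_Cl _ (hHLS _ g.2) (hHLS _ (inv_mem g.2)) x₀
      by_cases hd' : Disjoint ((g : Equiv.Perm Ω) • Cl LS x₀) (Cl LS x₀)
      · right
        rw [hg1]
        exact Finset.disjoint_coe.mpr hd'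
      · left
        rw [hsmul, Finset.not_disjoint_iff] at hd'
        obtain ⟨z, hz1, hz2⟩ := hd'
        have hrel : PRel LS x₀ ((g : Equiv.Perm Ω) x₀) :=
          (mem_Cl.mp hz2).trans (mem_Cl.mp hz1).symm
        rw [hg1, hsmul, ← Cl_eq_of_rel hrel]
    have hsubΔ : Cl LS x₀ ⊆ Δ := by
      intro y hy
      have := hstep 1 (one_mem _) x₀ y (mem_Cl.mp hy) (by simpa using hx₀Δ)
      simpa using this
    have hClx₀ : Cl LS x₀ = Δ := by
      by_contra hne
      have hle := hmin (Cl LS x₀) hClblock hsubΔ hne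
      have h2 : 1 < (Cl LS x₀).card :=
        Finset.one_lt_card.mpr ⟨x₀, mem_Cl.mpr Relation.ReflTransGen.refl,
          y₀, mem_Cl.mpr hP, hxy₀⟩
      omega
    intro δ hδ
    have hPδ : PRel LS x₀ δ := mem_Cl.mp (hClx₀ ▸ hδ)
    rw [← Cl_eq_of_rel hPδ]
    exact hClx₀
  have hCl : ∀ (h : Equiv.Perm Ω), h ∈ H → ∀ x ∈ h • Δ, Cl LS x = h • Δ := by
    intro h hh x hx
    obtain ⟨δ, hδ, rfl⟩ := Finset.mem_smul_finset.mp hx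
    calc Cl LS (h • δ) = h • Cl LS δ :=
          (smul_Cl h (hHLS h hh) (hHLS _ (inv_mem hh)) δ).symm
      _ = h • Δ := by rw [hClΔ δ hδ]
  -- block respect for members of the invariance group
  have hbresp : ∀ π ∈ invGroup R, ∀ h, h ∈ H → ∃ h', h' ∈ H ∧ π • (h • Δ) = h' • Δ := by
    intro π hπ h hh
    obtain ⟨h', hh', hx⟩ := hcover (π (h δ₀))
    refine ⟨h', hh', ?_⟩
    have hmem : h δ₀ ∈ h • Δ := Finset.mem_smul_finset.mpr ⟨δ₀, hδ₀, rfl⟩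
    have h1 : π • (h • Δ) = π • Cl LS (h δ₀) := by rw [hCl h hh (h δ₀) hmem]
    have h2 : π • Cl LS (h δ₀) = Cl LS (π (h δ₀)) :=
      smul_Cl π (hpresS π hπ) (hpresS π⁻¹ (inv_mem hπ)) _
    rw [h1, h2, hCl h' hh' _ hx]
  -- local action lemma
  have hlocal : ∀ π ∈ invGroup R, ∀ h h' : Equiv.Perm Ω, h ∈ H → h' ∈ H →
      π • (h • Δ) = h' • Δ →
      ∀ (hst : h'⁻¹ * π * h ∈ MulAction.stabilizer (Equiv.Perm Ω) Δ),
        restrictHom Δ ⟨h'⁻¹ * π * h, hst⟩ ∈ inducedGroup H Δ := by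
    intro π hπ h h' hh hh' heq hst
    rw [hS]
    intro s hsS
    rcases Nat.eq_zero_or_pos s.card with h0 | hpos
    · have h0' : s = ∅ := Finset.card_eq_zero.mp h0
      rw [h0'] at hsS ⊢
      simpa using hsS
    have hsled : s.card ≤ Δ.card := by
      simpa [Finset.card_univ, Fintype.card_coe] using Finset.card_le_univ s
    rcases eq_or_lt_of_le hsled with hfull | hlt
    · have hsu : s = Finset.univ := by
        apply Finset.eq_univ_of_card
        rw [hfull, Fintype.card_coe]
      rw [hsu] at hsS ⊢
      rw [Finset.smul_finset_univ]
      exact hsS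
    · have hx : h • hat Δ s ∈ LS := ⟨h, hh, s, ⟨hsS, hpos, hlt⟩, rfl⟩
      obtain ⟨h'', hh'', s'', hs'', heq2⟩ := hpresS π hπ _ hx
      have hne : (π • (h • hat Δ s)).Nonempty := by
        rw [← Finset.card_pos, Finset.card_smul_finset, Finset.card_smul_finset, hat_card]
        exact hpos
      obtain ⟨z, hz⟩ := hne
      have hz1 : z ∈ h'' • Δ := by
        rw [heq2] at hz
        exact Finset.smul_finset_subset_smul_finset (hat_subset s'') hz
      have hz2 : z ∈ h' • Δ := by
        have hsub : π • (h • hat Δ s) ⊆ π • (h • Δ) :=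
          Finset.smul_finset_subset_smul_finset
            (Finset.smul_finset_subset_smul_finset (hat_subset s))
        exact heq ▸ hsub hz
      have hbb : h'' • Δ = h' • Δ := by
        rcases hdisj h'' h' hh'' hh' with he | hdj
        · exact he
        · exact absurd hz2 (Finset.disjoint_left.mp hdj hz1)
      have hθst' : (h'⁻¹ * h'') • Δ = Δ := by
        rw [mul_smul, hbb, inv_smul_smul]
      have hθst : h'⁻¹ * h'' ∈ MulAction.stabilizer (Equiv.Perm Ω) Δ :=
        MulAction.mem_stabilizer_iff.mpr hθst'
      have hθK := hindmem (h'⁻¹ * h'') (H.mul_mem (inv_mem hh') hh'') hθst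
      rw [hS] at hθK
      have hθs'' := hθK s'' hs''.1
      have hq : (h'⁻¹ * π * h) • hat Δ s = (h'⁻¹ * h'') • hat Δ s'' := by
        rw [mul_smul, mul_smul, mul_smul, heq2]
      have h3 : hat Δ (restrictHom Δ ⟨h'⁻¹ * π * h, hst⟩ • s) =
          hat Δ (restrictHom Δ ⟨h'⁻¹ * h'', hθst⟩ • s'') := by
        rw [← smul_hat, ← smul_hat]
        exact hq
      rw [hat_inj h3]
      exact hθs''
  -- main inclusion
  have hRG : ∀ f ∈ invGroup R, f ∈ G := by
    intro f hf
    have hVLW : V ∈ LW := ⟨1, one_mem _, (one_smul _ _).symm⟩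
    obtain ⟨g, hgG, hfV⟩ := hpresW f hf V hVLW
    set e : Equiv.Perm Ω := g⁻¹ * f with hedef
    have heinv : e ∈ invGroup R := mul_mem (inv_mem (hGR g hgG)) hf
    have heV : e • V = V := by rw [hedef, mul_smul, hfV, inv_smul_smul]
    have heW : e • W = W := by
      by_cases hc : ∃ s, (s ∈ S ∧ 0 < s.card ∧ s.card < Δ.card) ∧ s.card = W.card
      · have hv : V = Wᶜ := by rw [hVdef, if_pos hc]
        rw [hv, smul_finset_compl'] at heV
        exact compl_injective heV
      · have hv : V = W := by rw [hVdef, if_neg hc]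
        rwa [hv] at heV
    have hblkfix : ∀ i, e • blk i = blk i := by
      intro i
      obtain ⟨h, hh, hbi⟩ := (hmemB _).mp (hblkB i)
      obtain ⟨h', hh', hb'⟩ := hbresp e heinv h hh
      have hbB : e • blk i ∈ B := by
        rw [← hbi, hb']
        exact (hmemB _).mpr ⟨h', hh', rfl⟩
      obtain ⟨j, hj⟩ := hblksurj _ hbB
      have htr : e • (W ∩ blk i) = W ∩ blk j := by
        rw [Finset.smul_finset_inter, heW, hj]
      have hci : (W ∩ blk i).card = (w i).card := by
        rw [hWtr i, Finset.card_smul_finset, hat_card]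
      have hcj : (W ∩ blk j).card = (w j).card := by
        rw [hWtr j, Finset.card_smul_finset, hat_card]
      have hcc : (fun i => (w i).card) j = (fun i => (w i).card) i := by
        simp only []
        rw [← hci, ← hcj, ← htr, Finset.card_smul_finset]
      rw [← hj, hwinj hcc]
    have hept : ∀ i, ∀ x ∈ blk i, e x = x := by
      intro i x hx
      have hrepi := hrep _ (hblkB i)
      have hψst' : (rep (blk i))⁻¹ * e * rep (blk i) ∈
          MulAction.stabilizer (Equiv.Perm Ω) Δ := by
        apply MulAction.mem_stabilizer_iff.mpr
        rw [mul_smul, mul_smul, hrepi.2, hblkfix i, inv_smul_eq_iff]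
        exact hrepi.2.symm
      have hψK := hlocal e heinv (rep (blk i)) (rep (blk i)) hrepi.1 hrepi.1
        (by rw [hrepi.2, hblkfix i]) hψst'
      have hψw : ((rep (blk i))⁻¹ * e * rep (blk i)) • hat Δ (w i) = hat Δ (w i) := by
        have h5 : e • (rep (blk i) • hat Δ (w i)) = rep (blk i) • hat Δ (w i) := by
          rw [← hWtr i, Finset.smul_finset_inter, heW, hblkfix]
        rw [mul_smul, mul_smul, h5, inv_smul_smul]
      have h6 : restrictHom Δ ⟨(rep (blk i))⁻¹ * e * rep (blk i), hψst'⟩ • w i = w i := by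
        apply hat_inj
        rw [← smul_hat]
        exact hψw
      have h7 := hwreg i _ hψK h6
      have h8 := restrict_eq_one_fixes _ h7
      obtain ⟨δ, hδ, hδx⟩ := Finset.mem_smul_finset.mp (hrepi.2 ▸ hx)
      have h9 := h8 δ hδ
      have h10 : (rep (blk i))⁻¹ (e (rep (blk i) δ)) = δ := by
        simpa [Equiv.Perm.mul_apply] using h9
      have h11 : e (rep (blk i) δ) = rep (blk i) δ := by
        have := congrArg (rep (blk i)) h10
        rwa [← Equiv.Perm.mul_apply, mul_inv_cancel, Equiv.Perm.one_apply] at this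
      rw [← hδx]
      exact h11
    have he1 : e = 1 := by
      apply Equiv.ext
      intro x
      obtain ⟨h, hh, hx⟩ := hcover x
      obtain ⟨i, hi⟩ := hblksurj (h • Δ) ((hmemB _).mpr ⟨h, hh, rfl⟩)
      simpa using hept i x (hi ▸ hx)
    have hfg : g = f := inv_mul_eq_one.mp (hedef ▸ he1)
    rwa [← hfg]
  refine ⟨R, le_antisymm (fun g hg => hGR g hg) (fun f hf => hRG f hf)⟩
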